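/- In the Class-A digraph D on N = 3K/2 vertices (K ≥ 4 even), every minimal partial clique has minimum out-degree at most 2, and no minimal partial clique has minimum out-degree exactly 2; hence all minimal partial cliques in D are directed cycles or single vertices, and the partial-clique number satisfies ℓ_PC(D) ≥ K. -/

import Mathlib

open Finset
open scoped Classical

universe u

variable {V : Type u}

/-- `l` is a directed cycle: nonempty, distinct vertices, consecutive arcs, wrap-around arc. -/
def IsCycle (A : V → V → Prop) (l : List V) : Prop :=
  l ≠ [] ∧ l.Nodup ∧ l.Chain' A ∧
    ∀ a b, l.getLast? = some a → l.head? = some b → A a b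

/-- `l` is a directed path from `i` to `j`. -/
def IsPath (A : V → V → Prop) (l : List V) (i j : V) : Prop :=
  l.Nodup ∧ l.Chain' A ∧ l.head? = some i ∧ l.getLast? = some j

/-- An I-path w.r.t. inner vertex set `VI`: a path between two distinct inner vertices
whose interior vertices are all non-inner. -/
def IsIPath [DecidableEq V] (A : V → V → Prop) (VI : Finset V) (l : List V) (i j : V) : Prop :=
  IsPath A l i j ∧ i ∈ VI ∧ j ∈ VI ∧ i ≠ j ∧ ∀ v ∈ l.dropLast.drop 1, v ∉ VI

/-- An I-cycle: a directed cycle containing exactly one inner vertex. -/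
def IsICycle [DecidableEq V] (A : V → V → Prop) (VI : Finset V) (l : List V) : Prop :=
  IsCycle A l ∧ (l.toFinset ∩ VI).card = 1

/-- A K-IC structure: exactly one I-path between each ordered pair of distinct inner
vertices, and no I-cycle. -/
def IsKIC [DecidableEq V] (A : V → V → Prop) (VI : Finset V) : Prop :=
  (∀ i ∈ VI, ∀ j ∈ VI, i ≠ j → ∃! l : List V, IsIPath A VI l i j) ∧
  ∀ l : List V, ¬ IsICycle A VI l

/-- Out-degree of a vertex. -/
noncomputable def outDeg [Fintype V] (A : V → V → Prop) (v : V) : ℕ :=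
  (univ.filter fun w => A v w).card

/-- Minimum out-degree of a digraph. -/
noncomputable def minOutDeg [Fintype V] [Nonempty V] (A : V → V → Prop) : ℕ :=
  univ.inf' univ_nonempty (outDeg A)

/-- Out-degree of `v` within the subdigraph induced on `s`. -/
noncomputable def outDegOn (A : V → V → Prop) (s : Finset V) (v : V) : ℕ :=
  (s.filter fun w => A v w).card

/-- Minimum out-degree of the subdigraph induced on `s` (0 if `s` is empty). -/
noncomputable def minOutDegOn (A : V → V → Prop) (s : Finset V) : ℕ :=
  if h : s.Nonempty then s.inf' h (outDegOn A s) else 0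

/-- Induced arc relation on a vertex subset. -/
def inducedRel (A : V → V → Prop) (s : Finset V) : V → V → Prop :=
  fun u v => u ∈ s ∧ v ∈ s ∧ A u v

/-- A valid index code of length `p` for `t`-bit messages: the messages of every receiver
are determined by the codeword together with its side information (its out-neighbours'
messages). -/
def IsIndexCode [Fintype V] (A : V → V → Prop) (t p : ℕ)
    (F : (V → (Fin t → ZMod 2)) → (Fin p → ZMod 2)) : Prop :=
  ∀ x y : V → (Fin t → ZMod 2), F x = F y →
    ∀ i : V, (∀ q, A i q → x q = y q) → x i = y i

/-- No directed cycle lies entirely inside `s`. -/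
def AcyclicOn (A : V → V → Prop) (s : Finset V) : Prop :=
  ∀ l : List V, IsCycle A l → ¬ (∀ v ∈ l, v ∈ s)

/-- `s` (as a partial clique) is minimal: its savings `δ⁺` strictly exceed the total
savings of any partition of `s` into at least two parts. -/
def IsMinimalPC [DecidableEq V] (A : V → V → Prop) (s : Finset V) : Prop :=
  ∀ P : Finpartition s, 2 ≤ P.parts.card →
    ∑ p ∈ P.parts, minOutDegOn A p < minOutDegOn A s

/-- A directed rooted tree inside the digraph `A`, rooted at inner vertex `i`, whose
leaves are exactly the other inner vertices and whose internal vertices are non-inner. -/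
structure IsICTree [DecidableEq V] (A : V → V → Prop) (VI : Finset V) (i : V)
    (T : V → V → Prop) : Prop where
  sub : ∀ u v, T u v → A u v
  root_mem : i ∈ VI
  root_no_parent : ∀ u, ¬ T u i
  unique_parent : ∀ u u' v, T u v → T u' v → u = u'
  reach : ∀ j ∈ VI, j ≠ i → Relation.ReflTransGen T i j
  leaf : ∀ j ∈ VI, j ≠ i → ∀ w, ¬ T j w
  connected : ∀ u v, T u v → Relation.ReflTransGen T i u
  acyclic : ∀ v, ¬ Relation.TransGen T v v

/-- The Class-A digraph on `3*m` vertices (`K = 2*m` inner vertices `0,…,K-1`,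
outer vertices `K,…,3m-1`): outer vertex `K+i` has arcs to inner `2i` and `2i+1`;
inner `2i` and `2i+1` have mutual arcs and arcs to every outer vertex except `K+i`. -/
def classARel (m : ℕ) : Fin (3 * m) → Fin (3 * m) → Prop := fun u v =>
  (2 * m ≤ u.val ∧ v.val < 2 * m ∧ v.val / 2 = u.val - 2 * m) ∨
  (u.val < 2 * m ∧ v.val < 2 * m ∧ u.val / 2 = v.val / 2 ∧ u ≠ v) ∨
  (u.val < 2 * m ∧ 2 * m ≤ v.val ∧ v.val - 2 * m ≠ u.val / 2)


/-! ### Auxiliary lemmas -/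

section AuxGen
variable {A : V → V → Prop} {s : Finset V} {v : V} {n : ℕ}

lemma minOutDegOn_le (hv : v ∈ s) : minOutDegOn A s ≤ outDegOn A s v := by
  rw [minOutDegOn, dif_pos ⟨v, hv⟩]; exact inf'_le _ hv

lemma le_minOutDegOn (hs : s.Nonempty) (H : ∀ v ∈ s, n ≤ outDegOn A s v) :
    n ≤ minOutDegOn A s := by
  rw [minOutDegOn, dif_pos hs]; exact le_inf' _ _ H

lemma exists_arc_of_one_le (h : 1 ≤ minOutDegOn A s) (hv : v ∈ s) : ∃ w ∈ s, A v w := by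
  have h1 : 0 < (s.filter fun w => A v w).card := h.trans (minOutDegOn_le hv)
  obtain ⟨w, hw⟩ := card_pos.mp h1
  exact ⟨w, (mem_filter.mp hw).1, (mem_filter.mp hw).2⟩

lemma one_le_minOutDegOn (hs : s.Nonempty) (H : ∀ v ∈ s, ∃ w ∈ s, A v w) :
    1 ≤ minOutDegOn A s := by
  refine le_minOutDegOn hs fun v hv => ?_
  obtain ⟨w, hw, haw⟩ := H v hv
  exact card_pos.mpr ⟨w, mem_filter.mpr ⟨hw, haw⟩⟩

lemma minOutDegOn_le_card (hs : s.Nonempty) : minOutDegOn A s ≤ s.card := by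
  obtain ⟨v, hv⟩ := hs
  exact (minOutDegOn_le hv).trans (card_le_card (filter_subset _ _))
end AuxGen

section AuxCycle
variable {A : V → V → Prop} {l : List V} {v : V}

lemma head?_eq_get (h : l ≠ []) : l.head? = some (l.get ⟨0, List.length_pos_iff.mpr h⟩) := by
  cases l with
  | nil => simp at h
  | cons a t => rfl

lemma getLast?_eq_get (h : l ≠ []) :
    l.getLast? = some (l.get ⟨l.length - 1, by
      have := List.length_pos_iff.mpr h; omega⟩) := by
  rw [List.getLast?_eq_getLast h, List.getLast_eq_getElem]; rfl

lemma mem_of_getLast?' {a : V} (h : l.getLast? = some a) : a ∈ l := by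
  cases l with
  | nil => simp at h
  | cons x t =>
    rw [List.getLast?_eq_getLast (by simp)] at h
    simp only [Option.some_inj] at h
    exact h ▸ List.getLast_mem _

lemma IsCycle.exists_arc (hl : IsCycle A l) (hv : v ∈ l) : ∃ w ∈ l, A v w := by
  obtain ⟨⟨k, hk⟩, rfl⟩ := List.mem_iff_get.mp hv
  by_cases h : k + 1 < l.length
  · exact ⟨l.get ⟨k + 1, h⟩, List.get_mem _ _,
      List.isChain_iff_getElem.mp hl.2.2.1 k (by omega)⟩
  · have hne : l ≠ [] := hl.1
    refine ⟨l.get ⟨0, List.length_pos_iff.mpr hne⟩, List.get_mem _ _, ?_⟩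
    apply hl.2.2.2 _ _ _ (head?_eq_get hne)
    rw [getLast?_eq_get hne]
    congr 2
    exact Fin.ext (by simp; omega)

lemma isCycle_of_getElem (hne : l ≠ []) (hnd : l.Nodup)
    (hchain : ∀ i : ℕ, (h : i + 1 < l.length) → A (l[i]'(by omega)) (l[i+1]'h))
    (hwrap : A (l[l.length - 1]'(by have := List.length_pos_iff.mpr hne; omega))
               (l[0]'(List.length_pos_iff.mpr hne))) : IsCycle A l := by
  refine ⟨hne, hnd, ?_, ?_⟩
  · unfold List.Chain'
    rw [List.isChain_iff_getElem]
    intro i h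
    exact hchain i (by omega)
  · intro a b ha hb
    rw [getLast?_eq_get hne] at ha
    rw [head?_eq_get hne] at hb
    simp only [Option.some_inj] at ha hb
    rw [← ha, ← hb]
    exact hwrap

lemma gel {l : List V} {i j : ℕ} {h1 : i < l.length} {h2 : j < l.length} (e : i = j) :
    l[i]'h1 = l[j]'h2 := by congr 1

lemma infix_pair {l : List V} {p : ℕ} (h : p + 1 < l.length) :
    [l[p]'(by omega), l[p+1]'h] <:+: l := by
  refine ⟨l.take p, l.drop (p+2), ?_⟩
  have h1 : l.drop p = l[p]'(by omega) :: l.drop (p+1) := List.drop_eq_getElem_cons (by omega)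
  have h2 : l.drop (p+1) = l[p+1]'h :: l.drop (p+2) := List.drop_eq_getElem_cons h
  have h3 : ([l[p]'(by omega), l[p+1]'h] : List V) ++ l.drop (p+2) = l.drop p := by
    rw [h1, h2]; rfl
  rw [List.append_assoc, h3, List.take_append_drop]

lemma cycle_one_le [DecidableEq V] (hl : IsCycle A l) :
    1 ≤ minOutDegOn A l.toFinset := by
  refine one_le_minOutDegOn (by simp [List.toFinset_nonempty_iff, hl.1]) fun v hv => ?_
  obtain ⟨w, hw, haw⟩ := hl.exists_arc (List.mem_toFinset.mp hv)
  exact ⟨w, List.mem_toFinset.mpr hw, haw⟩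
end AuxCycle

lemma exists_cycle [Finite V] [DecidableEq V] {A : V → V → Prop} {s : Finset V}
    (hs : s.Nonempty) (H : ∀ v ∈ s, ∃ w ∈ s, A v w) :
    ∃ l : List V, IsCycle A l ∧ l.toFinset ⊆ s := by
  classical
  have hf : ∀ v : V, ∃ w : V, v ∈ s → (w ∈ s ∧ A v w) := by
    intro v
    by_cases hv : v ∈ s
    · obtain ⟨w, hw, haw⟩ := H v hv; exact ⟨w, fun _ => ⟨hw, haw⟩⟩
    · exact ⟨v, fun h => absurd h hv⟩
  choose f hfs using hf
  obtain ⟨v0, hv0⟩ := hs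
  have hiter : ∀ n, f^[n] v0 ∈ s := by
    intro n; induction n with
    | zero => exact hv0
    | succ n ih => rw [Function.iterate_succ_apply']; exact (hfs _ ih).1
  obtain ⟨a, b, hab, heq⟩ := Finite.exists_ne_map_eq_of_infinite (fun n : ℕ => f^[n] v0)
  wlog hlt : a < b generalizing a b
  · exact this b a hab.symm heq.symm (by omega)
  set x := f^[a] v0 with hx
  have hxs : x ∈ s := hiter a
  have hper : ∃ p, 0 < p ∧ f^[p] x = x := by
    refine ⟨b - a, by omega, ?_⟩
    rw [hx, ← Function.iterate_add_apply]
    rw [show b - a + a = b by omega]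
    exact heq.symm
  set p := Nat.find hper with hp
  obtain ⟨hppos, hpx⟩ := Nat.find_spec hper
  have hiterx : ∀ n, f^[n] x ∈ s := by
    intro n; induction n with
    | zero => exact hxs
    | succ n ih => rw [Function.iterate_succ_apply']; exact (hfs _ ih).1
  refine ⟨(List.range p).map (fun i => f^[i] x), ⟨?_, ?_, ?_, ?_⟩, ?_⟩
  · simp [hp, hppos.ne']
  · have key : ∀ i j, i < p → j < p → i < j → f^[i] x = f^[j] x → False := by
      intro i j hi hj hij' hij
      have heq2 : f^[p - j + i] x = x := by
        rw [Function.iterate_add_apply, hij, ← Function.iterate_add_apply]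
        rw [show p - j + j = p by omega]
        exact hpx
      exact Nat.find_min hper (show p - j + i < p by omega) ⟨by omega, heq2⟩
    refine (List.nodup_range).map_on ?_
    intro i hi j hj hij
    simp only [List.mem_range] at hi hj
    by_contra hne
    rcases Nat.lt_or_ge i j with h' | h'
    · exact key i j hi hj h' hij
    · exact key j i hj hi (by omega) hij.symm
  · unfold List.Chain'
    rw [List.isChain_map]
    obtain ⟨p', hp'⟩ : ∃ p', p = p' + 1 := ⟨p - 1, by omega⟩
    rw [hp', List.isChain_range_succ]
    intro i hi
    rw [Function.iterate_succ_apply']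
    exact (hfs _ (hiterx i)).2
  · intro c d hc hd
    have hlen : ((List.range p).map (fun i => f^[i] x)).length = p := by simp
    have hne : ((List.range p).map (fun i => f^[i] x)) ≠ [] := by simp [hp, hppos.ne']
    rw [List.getLast?_eq_getLast hne, List.getLast_eq_getElem] at hc
    rw [List.head?_eq_head hne] at hd
    have hcv : c = f^[p-1] x := by
      have := hc
      simp only [Option.some_inj] at this
      rw [← this]
      rw [List.getElem_map]
      congr 1
      simp [hlen]
    have hdv : d = x := by
      have h0 : 0 < ((List.range p).map (fun i => f^[i] x)).length := by simp [hp, hppos]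
      rw [← List.get_mk_zero h0] at hd
      simp only [Option.some_inj] at hd
      rw [← hd, List.get_eq_getElem, List.getElem_map]
      simp [hppos]
    rw [hcv, hdv]
    have h2 : f^[p - 1 + 1] x = x := by rw [show p - 1 + 1 = p by omega]; exact hpx
    rw [Function.iterate_succ_apply'] at h2
    have h3 := (hfs _ (hiterx (p-1))).2
    rwa [h2] at h3
  · intro v hv
    simp only [List.mem_toFinset, List.mem_map] at hv
    obtain ⟨i, _, rfl⟩ := hv
    exact hiterx i

lemma chord_subcycle [DecidableEq V] {A : V → V → Prop} {l : List V} (hl : IsCycle A l)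
    (p q : ℕ) (hp : p < l.length) (hq : q < l.length)
    (hA : A (l[p]'hp) (l[q]'hq)) (hpq : p ≠ q)
    (hnotsucc : q ≠ p + 1)
    (hnotwrap : ¬(p = l.length - 1 ∧ q = 0)) :
    ∃ l' : List V, IsCycle A l' ∧ l'.toFinset ⊆ l.toFinset ∧ l'.length < l.length := by
  have hne : l ≠ [] := hl.1
  have hlen0 : 0 < l.length := List.length_pos_iff.mpr hne
  have hchain : ∀ i : ℕ, (h : i + 1 < l.length) → A (l[i]'(by omega)) (l[i+1]'h) := by
    intro i h
    exact List.isChain_iff_getElem.mp hl.2.2.1 i (by omega)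
  have hwrap : A (l[l.length - 1]'(by omega)) (l[0]'hlen0) := by
    apply hl.2.2.2 _ _ (getLast?_eq_get hne) (head?_eq_get hne)
  rcases Nat.lt_or_ge q p with hqp | hpq'
  · refine ⟨(l.drop q).take (p - q + 1), ?_, ?_, ?_⟩
    · have hlen' : ((l.drop q).take (p - q + 1)).length = p - q + 1 := by
        simp [List.length_take, List.length_drop]; omega
      have hget : ∀ i : ℕ, (h : i < p - q + 1) →
          ((l.drop q).take (p - q + 1))[i]'(by omega) = l[q + i]'(by omega) := by
        intro i h
        rw [List.getElem_take, List.getElem_drop]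
      refine isCycle_of_getElem ?_ ?_ ?_ ?_
      · intro h; rw [← List.length_eq_zero_iff] at h; omega
      · exact hl.2.1.sublist ((List.take_sublist _ _).trans (List.drop_sublist _ _))
      · intro i h
        rw [hlen'] at h
        rw [hget i (by omega), hget (i+1) (by omega)]
        exact hchain (q+i) (by omega)
      · rw [hget (((l.drop q).take (p - q + 1)).length - 1) (by omega), hget 0 (by omega)]
        rw [gel (show q + (((l.drop q).take (p - q + 1)).length - 1) = p by omega)]
        exact hA
    · intro v hv
      simp only [List.mem_toFinset] at hv ⊢
      exact ((List.take_sublist _ _).trans (List.drop_sublist _ _)).mem hv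
    · simp [List.length_take, List.length_drop]; omega
  · have hplq : p + 1 < q := by omega
    refine ⟨l.drop q ++ l.take (p + 1), ?_, ?_, ?_⟩
    · have hld : (l.drop q).length = l.length - q := List.length_drop
      have hlt : (l.take (p+1)).length = p + 1 := by simp [List.length_take]; omega
      have hlen' : (l.drop q ++ l.take (p+1)).length = (l.length - q) + (p+1) := by
        simp [hld, hlt]
      have hgetL : ∀ i : ℕ, (h : i < l.length - q) →
          (l.drop q ++ l.take (p+1))[i]'(by omega) = l[q + i]'(by omega) := by
        intro i h
        rw [List.getElem_append_left (by omega), List.getElem_drop]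
      have hgetR : ∀ i : ℕ, (h : l.length - q ≤ i) → (h2 : i < (l.length - q) + (p+1)) →
          (l.drop q ++ l.take (p+1))[i]'(by omega) = l[i - (l.length - q)]'(by omega) := by
        intro i h h2
        rw [List.getElem_append_right (by omega)]
        rw [List.getElem_take]
        exact gel (by omega)
      refine isCycle_of_getElem ?_ ?_ ?_ ?_
      · intro h; rw [← List.length_eq_zero_iff] at h; omega
      · rw [List.nodup_append]
        refine ⟨hl.2.1.sublist (List.drop_sublist _ _), hl.2.1.sublist (List.take_sublist _ _), ?_⟩
        intro a ha b hta hab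
        subst hab
        have hda : a ∈ l.drop (p+1) := by
          have hdd : l.drop q = (l.drop (p+1)).drop (q - (p+1)) := by
            rw [List.drop_drop]; congr 1; omega
          rw [hdd] at ha
          exact (List.drop_sublist _ _).mem ha
        have hnd := hl.2.1
        rw [← List.take_append_drop (p+1) l, List.nodup_append] at hnd
        exact hnd.2.2 a hta a hda rfl
      · intro i h
        rw [hlen'] at h
        rcases Nat.lt_or_ge (i+1) (l.length - q) with h2 | h2
        · rw [hgetL i (by omega), hgetL (i+1) h2]
          exact hchain (q+i) (by omega)
        · rcases Nat.eq_or_lt_of_le h2 with h3 | h3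
          · rw [hgetL i (by omega), hgetR (i+1) (by omega) (by omega)]
            rw [gel (show q + i = l.length - 1 by omega),
              gel (show i + 1 - (l.length - q) = 0 by omega)]
            exact hwrap
          · rw [hgetR i (by omega) (by omega), hgetR (i+1) (by omega) (by omega)]
            rw [gel (show i + 1 - (l.length - q) = (i - (l.length - q)) + 1 by omega)]
            exact hchain (i - (l.length - q)) (by omega)
      · rw [hgetR ((l.drop q ++ l.take (p+1)).length - 1) (by omega) (by omega),
          hgetL 0 (by omega)]
        rw [gel (show (l.drop q ++ l.take (p+1)).length - 1 - (l.length - q) = p by omega)]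
        exact hA
    · intro v hv
      simp only [List.mem_toFinset, List.mem_append] at hv
      simp only [List.mem_toFinset]
      rcases hv with h | h
      · exact (List.drop_sublist _ _).mem h
      · exact (List.take_sublist _ _).mem h
    · simp [List.length_take, List.length_drop]; omega

lemma not_min_two [DecidableEq V] {A : V → V → Prop} {s t1 t2 : Finset V}
    (hmin : IsMinimalPC A s) (h1 : t1.Nonempty) (h2 : t2.Nonempty)
    (hd : Disjoint t1 t2) (hs1 : t1 ⊆ s) (hs2 : t2 ⊆ s)
    (hδ : minOutDegOn A s ≤ minOutDegOn A t1 + minOutDegOn A t2) : False := by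
  classical
  have hne12 : t1 ≠ t2 := by
    rintro rfl
    exact h1.ne_empty (disjoint_self.mp hd)
  set r := s \ (t1 ∪ t2) with hr
  have hsub12 : t1 ∪ t2 ⊆ s := Finset.union_subset hs1 hs2
  have hdr1 : Disjoint t1 r := Finset.disjoint_left.mpr fun x hx hxr =>
    (Finset.mem_sdiff.mp hxr).2 (Finset.mem_union_left _ hx)
  have hdr2 : Disjoint t2 r := Finset.disjoint_left.mpr fun x hx hxr =>
    (Finset.mem_sdiff.mp hxr).2 (Finset.mem_union_right _ hx)
  by_cases hrne : r = ∅
  · have hs : s = t1 ∪ t2 := by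
      rw [hr] at hrne
      exact Finset.Subset.antisymm (Finset.sdiff_eq_empty_iff_subset.mp hrne) hsub12
    have hlt := hmin
      { parts := {t1, t2}
        supIndep := (Finset.supIndep_pair hne12).mpr hd
        sup_parts := by simp [hs]
        bot_notMem := by
          simp only [Finset.mem_insert, Finset.mem_singleton, bot_eq_empty]
          push_neg
          exact ⟨Ne.symm h1.ne_empty, Ne.symm h2.ne_empty⟩ }
      (by rw [Finset.card_pair hne12])
    simp only [Finset.sum_pair hne12] at hlt
    omega
  · have hrne' : r.Nonempty := Finset.nonempty_iff_ne_empty.mpr hrne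
    have ht1r : t1 ≠ r := fun h => h1.ne_empty (disjoint_self.mp (h ▸ hdr1))
    have ht2r : t2 ≠ r := fun h => h2.ne_empty (disjoint_self.mp (h ▸ hdr2))
    have hlt := hmin
      { parts := {t1, t2, r}
        supIndep := by
          apply Finset.supIndep_iff_pairwiseDisjoint.mpr
          intro a ha b hb hab
          simp only [Finset.coe_insert, Finset.coe_singleton, Set.mem_insert_iff,
            Set.mem_singleton_iff] at ha hb
          rcases ha with rfl | rfl | rfl <;> rcases hb with rfl | rfl | rfl <;>
            first
              | exact absurd rfl hab
              | exact hd
              | exact hd.symm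
              | exact hdr1
              | exact hdr1.symm
              | exact hdr2
              | exact hdr2.symm
        sup_parts := by
          simp only [Finset.sup_insert, Finset.sup_singleton, id]
          show t1 ∪ (t2 ∪ r) = s
          rw [← Finset.union_assoc]
          exact Finset.union_sdiff_of_subset hsub12
        bot_notMem := by
          simp only [Finset.mem_insert, Finset.mem_singleton, bot_eq_empty]
          push_neg
          exact ⟨Ne.symm h1.ne_empty, Ne.symm h2.ne_empty, Ne.symm hrne'.ne_empty⟩ }
      (by
        refine le_trans ?_ (Finset.card_le_card (show ({t1, t2} : Finset (Finset V)) ⊆ {t1, t2, r} by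
          intro x hx
          simp only [Finset.mem_insert, Finset.mem_singleton] at hx ⊢
          tauto))
        rw [Finset.card_pair hne12])
    rw [show ∑ p ∈ ({t1, t2, r} : Finset (Finset V)), minOutDegOn A p =
        minOutDegOn A t1 + minOutDegOn A t2 + minOutDegOn A r by
      rw [Finset.sum_insert (by simp [hne12, ht1r]), Finset.sum_pair ht2r]; ring] at hlt
    omega

lemma minimal_no_proper [DecidableEq V] {A : V → V → Prop} {s t : Finset V}
    (hmin : IsMinimalPC A s) (hδ : minOutDegOn A s ≤ 1) (ht : t.Nonempty)
    (hts : t ⊆ s) (htne : t ≠ s) (h1 : 1 ≤ minOutDegOn A t) : False := by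
  have hsd : (s \ t).Nonempty := by
    rw [Finset.sdiff_nonempty]
    intro hsub
    exact htne (Finset.Subset.antisymm hts hsub)
  refine not_min_two hmin ht hsd ?_ hts Finset.sdiff_subset (by omega)
  exact Finset.disjoint_left.mpr fun x hx hx2 => (Finset.mem_sdiff.mp hx2).2 hx

section ClassA
variable {m : ℕ} {s : Finset (Fin (3 * m))} {v w : Fin (3 * m)}

lemma classA_irrefl (v : Fin (3 * m)) : ¬ classARel m v v := by
  intro h
  rcases h with ⟨h1, h2, _⟩ | ⟨_, _, _, h4⟩ | ⟨h1, h2, _⟩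
  · omega
  · exact h4 rfl
  · omega

lemma arcOuter (hv : 2 * m ≤ v.val) : classARel m v w ↔
    (w.val = 2 * (v.val - 2 * m) ∨ w.val = 2 * (v.val - 2 * m) + 1) := by
  constructor
  · rintro (⟨h1, h2, h3⟩ | ⟨h1, _⟩ | ⟨h1, _⟩)
    · omega
    · omega
    · omega
  · intro h
    have := v.isLt
    left
    refine ⟨hv, by omega, by omega⟩

lemma arcInner (hv : v.val < 2 * m) : classARel m v w ↔
    ((w.val < 2 * m ∧ w.val / 2 = v.val / 2 ∧ w.val ≠ v.val) ∨
     (2 * m ≤ w.val ∧ w.val - 2 * m ≠ v.val / 2)) := by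
  constructor
  · rintro (⟨h1, _⟩ | ⟨h1, h2, h3, h4⟩ | ⟨h1, h2, h3⟩)
    · omega
    · exact Or.inl ⟨h2, h3.symm, fun h => h4 (Fin.ext h.symm)⟩
    · exact Or.inr ⟨h2, h3⟩
  · rintro (⟨h1, h2, h3⟩ | ⟨h1, h2⟩)
    · exact Or.inr (Or.inl ⟨hv, h1, h2.symm, fun h => h3 (congrArg Fin.val h).symm⟩)
    · exact Or.inr (Or.inr ⟨hv, h1, h2⟩)

lemma outer_filter_subset_pair (hm : 2 ≤ m) (hv : 2 * m ≤ v.val) :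
    s.filter (fun w => classARel m v w) ⊆
      {(⟨2 * (v.val - 2 * m), by have := v.isLt; omega⟩ : Fin (3 * m)),
       ⟨2 * (v.val - 2 * m) + 1, by have := v.isLt; omega⟩} := by
  intro w hw
  have h := (mem_filter.mp hw).2
  rw [arcOuter hv] at h
  simp only [mem_insert, mem_singleton]
  rcases h with h | h
  · exact Or.inl (Fin.ext h)
  · exact Or.inr (Fin.ext h)

lemma outer_outDegOn_le (hm : 2 ≤ m) (hv : 2 * m ≤ v.val) : outDegOn (classARel m) s v ≤ 2 := by
  refine le_trans (card_le_card (outer_filter_subset_pair hm hv)) ?_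
  exact le_trans (card_insert_le _ _) (by simp)

lemma outer_pair_mem (hm : 2 ≤ m) (hv : 2 * m ≤ v.val)
    (h2 : 2 ≤ outDegOn (classARel m) s v) :
    (⟨2 * (v.val - 2 * m), by have := v.isLt; omega⟩ : Fin (3 * m)) ∈ s ∧
    (⟨2 * (v.val - 2 * m) + 1, by have := v.isLt; omega⟩ : Fin (3 * m)) ∈ s := by
  set a : Fin (3 * m) := ⟨2 * (v.val - 2 * m), by have := v.isLt; omega⟩
  set b : Fin (3 * m) := ⟨2 * (v.val - 2 * m) + 1, by have := v.isLt; omega⟩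
  have hsub := outer_filter_subset_pair (s := s) hm hv
  have hcard : ({a, b} : Finset (Fin (3 * m))).card ≤ (s.filter (fun w => classARel m v w)).card := by
    refine le_trans ?_ h2
    exact le_trans (card_insert_le _ _) (by simp)
  have heq := Finset.eq_of_subset_of_card_le hsub hcard
  constructor
  · have : a ∈ ({a, b} : Finset (Fin (3 * m))) := by simp
    rw [← heq] at this
    exact (mem_filter.mp this).1
  · have : b ∈ ({a, b} : Finset (Fin (3 * m))) := by simp
    rw [← heq] at this
    exact (mem_filter.mp this).1

lemma inner_filter_subset (hv : v.val < 2 * m) (hall : ∀ w ∈ s, w.val < 2 * m) :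
    s.filter (fun w => classARel m v w) ⊆
      {(⟨2 * (v.val / 2) + 1 - v.val % 2, by omega⟩ : Fin (3 * m))} := by
  intro w hw
  obtain ⟨hws, h⟩ := mem_filter.mp hw
  rw [arcInner hv] at h
  have hwi := hall w hws
  simp only [mem_singleton]
  rcases h with ⟨h1, h2, h3⟩ | ⟨h1, _⟩
  · refine Fin.ext ?_
    show w.val = 2 * (v.val / 2) + 1 - v.val % 2
    omega
  · omega

lemma allinner_outDegOn_le_one (hv : v.val < 2 * m) (hall : ∀ w ∈ s, w.val < 2 * m) :
    outDegOn (classARel m) s v ≤ 1 := by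
  have := card_le_card (inner_filter_subset hv hall)
  simpa [outDegOn] using this

lemma inner_exists_outer_arc (hv : v.val < 2 * m)
    (h2 : 2 ≤ outDegOn (classARel m) s v) :
    ∃ w ∈ s, 2 * m ≤ w.val ∧ classARel m v w := by
  by_contra hc
  push_neg at hc
  have hsub : s.filter (fun w => classARel m v w) ⊆
      {(⟨2 * (v.val / 2) + 1 - v.val % 2, by omega⟩ : Fin (3 * m))} := by
    intro w hw
    obtain ⟨hws, h⟩ := mem_filter.mp hw
    have h' := h
    rw [arcInner hv] at h'
    simp only [mem_singleton]
    rcases h' with ⟨h1, h2', h3⟩ | ⟨h1, _⟩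
    · refine Fin.ext ?_
      show w.val = 2 * (v.val / 2) + 1 - v.val % 2
      omega
    · exact absurd h (hc w hws h1)
  have h3 := card_le_card hsub
  simp only [card_singleton] at h3
  unfold outDegOn at h2
  omega
end ClassA

section ClassA2
variable {m : ℕ} {s : Finset (Fin (3 * m))} {v w : Fin (3 * m)}

lemma minOutDegOn_le_two (hm : 2 ≤ m) (hs : s.Nonempty) :
    minOutDegOn (classARel m) s ≤ 2 := by
  by_cases hout : ∃ v ∈ s, 2 * m ≤ v.val
  · obtain ⟨v, hv, ho⟩ := hout
    exact (minOutDegOn_le hv).trans (outer_outDegOn_le hm ho)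
  · push_neg at hout
    obtain ⟨v, hv⟩ := hs
    exact le_trans ((minOutDegOn_le hv).trans
      (allinner_outDegOn_le_one (hout v hv) hout)) (by omega)

lemma pair_min (hm : 2 ≤ m) {c : ℕ} (hc : c < m) :
    1 ≤ minOutDegOn (classARel m)
      ({⟨2*c, by omega⟩, ⟨2*c+1, by omega⟩} : Finset (Fin (3 * m))) := by
  refine le_minOutDegOn ⟨_, mem_insert_self _ _⟩ fun v hv => ?_
  rw [mem_insert, mem_singleton] at hv
  refine card_pos.mpr ?_
  rcases hv with rfl | rfl
  · refine ⟨⟨2*c+1, by omega⟩, mem_filter.mpr ⟨by simp, ?_⟩⟩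
    exact Or.inr (Or.inl ⟨show 2*c < 2*m by omega, show 2*c+1 < 2*m by omega,
      show (2*c)/2 = (2*c+1)/2 by omega,
      by intro h; have h2 : (2*c : ℕ) = 2*c+1 := congrArg Fin.val h; omega⟩)
  · refine ⟨⟨2*c, by omega⟩, mem_filter.mpr ⟨by simp, ?_⟩⟩
    exact Or.inr (Or.inl ⟨show 2*c+1 < 2*m by omega, show 2*c < 2*m by omega,
      show (2*c+1)/2 = (2*c)/2 by omega,
      by intro h; have h2 : (2*c+1 : ℕ) = 2*c := congrArg Fin.val h; omega⟩)

lemma allinner_pair (hm : 2 ≤ m) {p : Finset (Fin (3 * m))} (hp : p.Nonempty)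
    (hδ : 1 ≤ minOutDegOn (classARel m) p)
    (hall : ∀ w ∈ p, w.val < 2 * m) :
    (p.min' hp).val / 2 < m ∧
    (⟨2*((p.min' hp).val/2), by have := hall _ (p.min'_mem hp); omega⟩ : Fin (3 * m)) ∈ p ∧
    (⟨2*((p.min' hp).val/2)+1, by have := hall _ (p.min'_mem hp); omega⟩ : Fin (3 * m)) ∈ p := by
  have hv0 : p.min' hp ∈ p := p.min'_mem hp
  have hv0i : (p.min' hp).val < 2 * m := hall _ hv0
  obtain ⟨w, hw, hAw⟩ := exists_arc_of_one_le hδ hv0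
  have hwi : w.val < 2 * m := hall _ hw
  rw [arcInner hv0i] at hAw
  rcases hAw with ⟨h1, h2, h3⟩ | ⟨h1, _⟩
  · refine ⟨by omega, ?_, ?_⟩
    · rcases (show (p.min' hp).val = 2*((p.min' hp).val/2) ∨ w.val = 2*((p.min' hp).val/2)
          by omega) with h | h
      · rw [show (⟨2*((p.min' hp).val/2), by omega⟩ : Fin (3 * m)) = p.min' hp from
          Fin.ext h.symm]
        exact hv0
      · rw [show (⟨2*((p.min' hp).val/2), by omega⟩ : Fin (3 * m)) = w from Fin.ext h.symm]
        exact hw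
    · rcases (show (p.min' hp).val = 2*((p.min' hp).val/2)+1 ∨ w.val = 2*((p.min' hp).val/2)+1
          by omega) with h | h
      · rw [show (⟨2*((p.min' hp).val/2)+1, by omega⟩ : Fin (3 * m)) = p.min' hp from
          Fin.ext h.symm]
        exact hv0
      · rw [show (⟨2*((p.min' hp).val/2)+1, by omega⟩ : Fin (3 * m)) = w from Fin.ext h.symm]
        exact hw
  · omega

end ClassA2

noncomputable def chargeSet (m : ℕ) (p : Finset (Fin (3 * m))) : Finset (Fin (3 * m)) :=
  if 1 ≤ minOutDegOn (classARel m) p then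
    if (p.filter (fun v => 2 * m ≤ v.val)).Nonempty then p.filter (fun v => 2 * m ≤ v.val)
    else if h : p.Nonempty then
      if h2 : 2 * m + ((p.min' h).val) / 2 < 3 * m then
        {(⟨2 * m + ((p.min' h).val) / 2, h2⟩ : Fin (3 * m))}
      else ∅
    else ∅
  else ∅

section ClassA3
variable {m : ℕ}

lemma mem_chargeSet (hm : 2 ≤ m) {p : Finset (Fin (3 * m))} {x : Fin (3 * m)}
    (hx : x ∈ chargeSet m p) :
    1 ≤ minOutDegOn (classARel m) p ∧ 2 * m ≤ x.val ∧
    (x ∈ p ∨ ((⟨2*(x.val - 2*m), by have := x.isLt; omega⟩ : Fin (3 * m)) ∈ p ∧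
              (⟨2*(x.val - 2*m)+1, by have := x.isLt; omega⟩ : Fin (3 * m)) ∈ p)) := by
  rw [chargeSet] at hx
  split_ifs at hx with h1 h2 h3 h4
  · obtain ⟨hxp, hxo⟩ := mem_filter.mp hx
    exact ⟨h1, hxo, Or.inl hxp⟩
  · have hall : ∀ w ∈ p, w.val < 2 * m := by
      intro w hw
      by_contra hc
      exact h2 ⟨w, mem_filter.mpr ⟨hw, by omega⟩⟩
    obtain ⟨hcm, hma, hmb⟩ := allinner_pair hm h3 h1 hall
    rw [mem_singleton] at hx
    have hxval : x.val = 2 * m + ((p.min' h3).val) / 2 := congrArg Fin.val hx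
    refine ⟨h1, by omega, Or.inr ⟨?_, ?_⟩⟩
    · rw [show (⟨2*(x.val - 2*m), by have := x.isLt; omega⟩ : Fin (3 * m)) =
        ⟨2*((p.min' h3).val/2), by omega⟩ from Fin.ext (by show 2*(x.val-2*m) = 2*((p.min' h3).val/2); omega)]
      exact hma
    · rw [show (⟨2*(x.val - 2*m)+1, by have := x.isLt; omega⟩ : Fin (3 * m)) =
        ⟨2*((p.min' h3).val/2)+1, by omega⟩ from Fin.ext (by show 2*(x.val-2*m)+1 = 2*((p.min' h3).val/2)+1; omega)]
      exact hmb
  · simp at hx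
  · simp at hx
  · simp at hx

lemma outer_card (hm : 2 ≤ m) :
    (univ.filter (fun v : Fin (3 * m) => 2 * m ≤ v.val)).card = m := by
  have himg : univ.filter (fun v : Fin (3 * m) => 2 * m ≤ v.val) =
      Finset.image (fun i : Fin m => (⟨2 * m + i.val, by have := i.isLt; omega⟩ : Fin (3 * m)))
        univ := by
    apply Finset.Subset.antisymm
    · intro x hx
      obtain ⟨-, hxo⟩ := mem_filter.mp hx
      refine Finset.mem_image.mpr ⟨⟨x.val - 2 * m, by have := x.isLt; omega⟩, mem_univ _, ?_⟩
      refine Fin.ext ?_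
      show 2 * m + (x.val - 2 * m) = x.val
      omega
    · intro x hx
      obtain ⟨i, -, rfl⟩ := Finset.mem_image.mp hx
      refine mem_filter.mpr ⟨mem_univ _, ?_⟩
      show 2 * m ≤ 2 * m + i.val
      omega
  rw [himg, Finset.card_image_of_injective _ (fun i j hij => Fin.ext (by
      have h2 : 2 * m + i.val = 2 * m + j.val := congrArg Fin.val hij
      omega)), Finset.card_univ, Fintype.card_fin]

lemma savings_le (hm : 2 ≤ m) (P : Finpartition (univ : Finset (Fin (3 * m)))) :
    ∑ p ∈ P.parts, minOutDegOn (classARel m) p ≤ m := by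
  have hdisjparts : ∀ p ∈ P.parts, ∀ q ∈ P.parts, p ≠ q → Disjoint p q := by
    intro p hp q hq hpq
    exact (Finset.supIndep_iff_pairwiseDisjoint.mp P.supIndep) hp hq hpq
  have hO1 : ∀ p ∈ P.parts, minOutDegOn (classARel m) p ≤ (chargeSet m p).card := by
    intro p hp
    by_cases hδ : 1 ≤ minOutDegOn (classARel m) p
    · rw [chargeSet, if_pos hδ]
      by_cases hout : (p.filter (fun v => 2 * m ≤ v.val)).Nonempty
      · rw [if_pos hout]
        obtain ⟨v, hv⟩ := hout
        obtain ⟨hvp, hvo⟩ := mem_filter.mp hv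
        have hvo' : 2 * m ≤ v.val := hvo
        have hd2 : minOutDegOn (classARel m) p ≤ 2 :=
          (minOutDegOn_le hvp).trans (outer_outDegOn_le hm hvo')
        rcases Nat.lt_or_ge (minOutDegOn (classARel m) p) 2 with h | h
        · have hpos : 1 ≤ (p.filter (fun v => 2 * m ≤ v.val)).card := card_pos.mpr ⟨v, hv⟩
          omega
        · have hdeg : 2 ≤ outDegOn (classARel m) p v := le_trans h (minOutDegOn_le hvp)
          obtain ⟨ha, hb⟩ := outer_pair_mem hm hvo' hdeg
          have hai : (2*(v.val - 2*m) : ℕ) < 2 * m := by have := v.isLt; omega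
          have hdega : 2 ≤ outDegOn (classARel m) p
              ⟨2*(v.val - 2*m), by have := v.isLt; omega⟩ := le_trans h (minOutDegOn_le ha)
          obtain ⟨w, hwp, hwo, hAw⟩ := inner_exists_outer_arc hai hdega
          have hwv : w ≠ v := by
            rw [arcInner hai] at hAw
            rcases hAw with ⟨h1, _⟩ | ⟨h1, h2⟩
            · omega
            · have h2' : w.val - 2*m ≠ (2*(v.val - 2*m))/2 := h2
              intro he
              rw [he] at h2'
              omega
          have h2card : 2 ≤ (p.filter (fun v => 2 * m ≤ v.val)).card := by
            calc 2 = ({w, v} : Finset (Fin (3 * m))).card := (card_pair hwv).symm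
            _ ≤ _ := card_le_card (by
                intro y hy
                simp only [mem_insert, mem_singleton] at hy
                rcases hy with rfl | rfl
                · exact mem_filter.mpr ⟨hwp, by simpa using hwo⟩
                · exact mem_filter.mpr ⟨hvp, hvo⟩)
          omega
      · rw [if_neg hout]
        have hall : ∀ w ∈ p, w.val < 2 * m := by
          intro w hw
          by_contra hc
          exact hout ⟨w, mem_filter.mpr ⟨hw, by omega⟩⟩
        have hpne : p.Nonempty := P.nonempty_of_mem_parts hp
        have hδ1 : minOutDegOn (classARel m) p ≤ 1 := by
          obtain ⟨v, hv⟩ := hpne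
          exact (minOutDegOn_le hv).trans (allinner_outDegOn_le_one (hall v hv) hall)
        rw [dif_pos hpne]
        have hb : 2 * m + ((p.min' hpne).val) / 2 < 3 * m := by
          have := hall _ (p.min'_mem hpne); omega
        rw [dif_pos hb, card_singleton]
        omega
    · rw [chargeSet, if_neg hδ]; omega
  have hO3 : ∀ p ∈ P.parts, ∀ q ∈ P.parts, p ≠ q →
      Disjoint (chargeSet m p) (chargeSet m q) := by
    intro p hp q hq hpq
    rw [Finset.disjoint_left]
    intro x hxp hxq
    have hdisj : Disjoint p q := hdisjparts p hp q hq hpq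
    obtain ⟨hδp, hxo, hcp⟩ := mem_chargeSet hm hxp
    obtain ⟨hδq, -, hcq⟩ := mem_chargeSet hm hxq
    have key : ∀ {r : Finset (Fin (3 * m))}, x ∈ r → 1 ≤ minOutDegOn (classARel m) r →
        ((⟨2*(x.val - 2*m), by have := x.isLt; omega⟩ : Fin (3 * m)) ∈ r ∨
         (⟨2*(x.val - 2*m)+1, by have := x.isLt; omega⟩ : Fin (3 * m)) ∈ r) := by
      intro r hxr hδr
      obtain ⟨w, hwr, hAw⟩ := exists_arc_of_one_le hδr hxr
      rw [arcOuter hxo] at hAw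
      rcases hAw with h | h
      · exact Or.inl (by
          rw [show (⟨2*(x.val - 2*m), by have := x.isLt; omega⟩ : Fin (3 * m)) = w from
            Fin.ext h.symm]
          exact hwr)
      · exact Or.inr (by
          rw [show (⟨2*(x.val - 2*m)+1, by have := x.isLt; omega⟩ : Fin (3 * m)) = w from
            Fin.ext h.symm]
          exact hwr)
    rcases hcp with hxinp | ⟨hpa, hpb⟩
    · rcases hcq with hxinq | ⟨hqa, hqb⟩
      · exact (Finset.disjoint_left.mp hdisj hxinp) hxinq
      · rcases key hxinp hδp with h | h
        · exact (Finset.disjoint_left.mp hdisj h) hqa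
        · exact (Finset.disjoint_left.mp hdisj h) hqb
    · rcases hcq with hxinq | ⟨hqa, hqb⟩
      · rcases key hxinq hδq with h | h
        · exact (Finset.disjoint_left.mp hdisj hpa) h
        · exact (Finset.disjoint_left.mp hdisj hpb) h
      · exact (Finset.disjoint_left.mp hdisj hpa) hqa
  calc ∑ p ∈ P.parts, minOutDegOn (classARel m) p
      ≤ ∑ p ∈ P.parts, (chargeSet m p).card := Finset.sum_le_sum hO1
    _ = (P.parts.biUnion (chargeSet m)).card := (Finset.card_biUnion hO3).symm
    _ ≤ (univ.filter (fun v : Fin (3 * m) => 2 * m ≤ v.val)).card := Finset.card_le_card (by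
        intro x hx
        obtain ⟨p, hp, hmem⟩ := Finset.mem_biUnion.mp hx
        exact mem_filter.mpr ⟨mem_univ _, (mem_chargeSet hm hmem).2.1⟩)
    _ = m := outer_card hm

end ClassA3

set_option maxHeartbeats 1600000 in
/-- In the Class-A digraph: every minimal partial clique has minimum out-degree at most
2 and never exactly 2; hence each is a single vertex or a directed cycle, and every
partial-clique partition has total length at least K, i.e. ℓ_PC(D) ≥ K. -/
theorem stmt18 (K m : ℕ) (hm : K = 2 * m) (hK : 4 ≤ K) :
    (∀ s : Finset (Fin (3 * m)), s.Nonempty → IsMinimalPC (classARel m) s →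
      minOutDegOn (classARel m) s ≤ 2 ∧ minOutDegOn (classARel m) s ≠ 2 ∧
      (s.card = 1 ∨ ∃ l : List (Fin (3 * m)), l.Nodup ∧ l.toFinset = s ∧
        ∀ u v, inducedRel (classARel m) s u v ↔
          ([u, v] <:+: l ∨ (l.getLast? = some u ∧ l.head? = some v)))) ∧
    (∀ P : Finpartition (univ : Finset (Fin (3 * m))),
      K ≤ ∑ s ∈ P.parts, (s.card - minOutDegOn (classARel m) s)) := by
  have hm2 : 2 ≤ m := by omega
  constructor
  · intro s hs hmin
    have hle2 : minOutDegOn (classARel m) s ≤ 2 := minOutDegOn_le_two hm2 hs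
    have hne2 : minOutDegOn (classARel m) s ≠ 2 := by
      intro h2
      have hout : ∃ v ∈ s, 2 * m ≤ v.val := by
        by_contra hc
        push_neg at hc
        obtain ⟨v, hv⟩ := hs
        have := (minOutDegOn_le hv).trans (allinner_outDegOn_le_one (hc v hv) hc)
        omega
      obtain ⟨v, hv, hvo⟩ := hout
      have hdeg : 2 ≤ outDegOn (classARel m) s v := h2.symm.trans_le (minOutDegOn_le hv)
      obtain ⟨ha, hb⟩ := outer_pair_mem hm2 hvo hdeg
      have hai : (2*(v.val - 2*m) : ℕ) < 2 * m := by have := v.isLt; omega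
      have hdega : 2 ≤ outDegOn (classARel m) s ⟨2*(v.val - 2*m), by have := v.isLt; omega⟩ :=
        h2.symm.trans_le (minOutDegOn_le ha)
      obtain ⟨w, hw, hwo, hAw⟩ := inner_exists_outer_arc hai hdega
      have hwd : w.val - 2*m ≠ v.val - 2*m := by
        rw [arcInner hai] at hAw
        rcases hAw with ⟨h1, _⟩ | ⟨h1, hne⟩
        · omega
        · have hne' : w.val - 2*m ≠ (2*(v.val - 2*m))/2 := hne
          omega
      have hdegw : 2 ≤ outDegOn (classARel m) s w := h2.symm.trans_le (minOutDegOn_le hw)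
      obtain ⟨ha', hb'⟩ := outer_pair_mem hm2 hwo hdegw
      have hp1 := pair_min (m := m) hm2 (c := v.val - 2*m) (by have := v.isLt; omega)
      have hp2 := pair_min (m := m) hm2 (c := w.val - 2*m) (by have := w.isLt; omega)
      refine not_min_two (t1 := ({⟨2*(v.val - 2*m), by have := v.isLt; omega⟩,
          ⟨2*(v.val - 2*m)+1, by have := v.isLt; omega⟩} : Finset (Fin (3 * m))))
        (t2 := ({⟨2*(w.val - 2*m), by have := w.isLt; omega⟩,
          ⟨2*(w.val - 2*m)+1, by have := w.isLt; omega⟩} : Finset (Fin (3 * m))))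
        hmin ⟨_, mem_insert_self _ _⟩ ⟨_, mem_insert_self _ _⟩ ?_ ?_ ?_ ?_
      · rw [Finset.disjoint_left]
        intro y hy1 hy2
        simp only [mem_insert, mem_singleton] at hy1 hy2
        rcases hy1 with rfl | rfl
        · rcases hy2 with h | h
          · have he : 2*(v.val - 2*m) = 2*(w.val - 2*m) := congrArg Fin.val h
            omega
          · have he : 2*(v.val - 2*m) = 2*(w.val - 2*m)+1 := congrArg Fin.val h
            omega
        · rcases hy2 with h | h
          · have he : 2*(v.val - 2*m)+1 = 2*(w.val - 2*m) := congrArg Fin.val h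
            omega
          · have he : 2*(v.val - 2*m)+1 = 2*(w.val - 2*m)+1 := congrArg Fin.val h
            omega
      · exact insert_subset_iff.mpr ⟨ha, singleton_subset_iff.mpr hb⟩
      · exact insert_subset_iff.mpr ⟨ha', singleton_subset_iff.mpr hb'⟩
      · exact le_trans (le_of_eq h2) (Nat.add_le_add hp1 hp2)
    refine ⟨hle2, hne2, ?_⟩
    by_cases hc1 : s.card = 1
    · exact Or.inl hc1
    right
    have hcard2 : 2 ≤ s.card := by
      have := hs.card_pos
      omega
    have hδ1 : 1 ≤ minOutDegOn (classARel m) s := by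
      by_contra hlt
      have h0 : minOutDegOn (classARel m) s = 0 := by omega
      obtain ⟨u, hu, v', hv', huv⟩ := Finset.one_lt_card.mp (show 1 < s.card by omega)
      exact not_min_two (t1 := {u}) (t2 := {v'}) hmin ⟨u, mem_singleton_self u⟩
        ⟨v', mem_singleton_self v'⟩ (by simp [Finset.disjoint_left, huv])
        (singleton_subset_iff.mpr hu) (singleton_subset_iff.mpr hv')
        (by rw [h0]; exact Nat.zero_le _)
    obtain ⟨l, hl, hsub⟩ := exists_cycle hs (fun v hv => exists_arc_of_one_le hδ1 hv)
    have hfull : l.toFinset = s := by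
      by_contra hnefull
      exact minimal_no_proper hmin (by omega) (by simp [List.toFinset_nonempty_iff, hl.1])
        hsub hnefull (cycle_one_le hl)
    refine ⟨l, hl.2.1, hfull, fun u v => ⟨?_, ?_⟩⟩
    · rintro ⟨hus, hvs, hA⟩
      by_contra hnot
      push_neg at hnot
      obtain ⟨hnot1, hnot2⟩ := hnot
      rw [← hfull, List.mem_toFinset] at hus hvs
      obtain ⟨p, hp, hup⟩ := List.mem_iff_getElem.mp hus
      obtain ⟨q, hq, hvq⟩ := List.mem_iff_getElem.mp hvs
      have hApq : classARel m (l[p]'hp) (l[q]'hq) := by rw [hup, hvq]; exact hA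
      have hpq : p ≠ q := by
        rintro rfl
        rw [hup] at hvq
        rw [← hvq] at hA
        exact classA_irrefl u hA
      have hns : q ≠ p + 1 := by
        rintro rfl
        apply hnot1
        rw [← hup, ← hvq]
        exact infix_pair hq
      have hnw : ¬(p = l.length - 1 ∧ q = 0) := by
        rintro ⟨hp1, hq0⟩
        refine hnot2 ?_ ?_
        · rw [getLast?_eq_get hl.1]
          simp only [Option.some_inj]
          rw [← hup]
          exact gel (by omega)
        · rw [head?_eq_get hl.1]
          simp only [Option.some_inj]
          rw [← hvq]
          exact gel (by omega)
      obtain ⟨l', hl', hsubl, hlenl⟩ := chord_subcycle hl p q hp hq hApq hpq hns hnw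
      have hsubs : l'.toFinset ⊆ s := hfull ▸ hsubl
      have hnes : l'.toFinset ≠ s := by
        intro he
        have h1 := List.toFinset_card_of_nodup hl'.2.1
        have h2 := List.toFinset_card_of_nodup hl.2.1
        rw [he] at h1
        rw [hfull] at h2
        omega
      exact minimal_no_proper hmin (by omega) (by simp [List.toFinset_nonempty_iff, hl'.1])
        hsubs hnes (cycle_one_le hl')
    · rintro (hinf | ⟨hlast, hhead⟩)
      · have hA : classARel m u v := List.isChain_pair.mp (hl.2.2.1.infix hinf)
        refine ⟨?_, ?_, hA⟩
        · rw [← hfull]; exact List.mem_toFinset.mpr (hinf.subset (by simp))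
        · rw [← hfull]; exact List.mem_toFinset.mpr (hinf.subset (by simp))
      · refine ⟨?_, ?_, hl.2.2.2 u v hlast hhead⟩
        · rw [← hfull]; exact List.mem_toFinset.mpr (mem_of_getLast?' hlast)
        · rw [← hfull]; exact List.mem_toFinset.mpr (List.mem_of_mem_head? hhead)
  · intro P
    have hsav := savings_le hm2 P
    have hcards : ∑ p ∈ P.parts, p.card = 3 * m := by
      rw [P.sum_card_parts, Finset.card_univ, Fintype.card_fin]
    have hsplit : ∑ p ∈ P.parts, (p.card - minOutDegOn (classARel m) p)
        + ∑ p ∈ P.parts, minOutDegOn (classARel m) p = ∑ p ∈ P.parts, p.card := by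
      rw [← Finset.sum_add_distrib]
      refine Finset.sum_congr rfl fun p hp => ?_
      have h1 := minOutDegOn_le_card (A := classARel m) (P.nonempty_of_mem_parts hp)
      omega
    omega
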